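/- Under the regularity conditions of the previous identity, the time-score-matching objective J(θ) = E_{t~U[0,1]} E_{p_t(x)}[λ(t)(∂_t log p_t(x) - s_θ(x,t))^2] equals, up to an additive constant independent of s_θ, the objective L(θ) = 2 E_{p_0}[λ(0) s_θ(x,0)] - 2 E_{p_1}[λ(1) s_θ(x,1)] + E_t E_{p_t}[2λ(t) ∂_t s_θ(x,t) + 2λ'(t) s_θ(x,t) + λ(t) s_θ(x,t)^2]. -/

import Mathlib

open MeasureTheory

section Aux

variable {D : ℕ}

/-- Convert the double (interval) integral to a product-measure integral. -/
lemma stmt8_conv (f : ℝ × (Fin D → ℝ) → ℝ)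
    (hf : Integrable f ((volume.restrict (Set.Icc (0:ℝ) 1)).prod volume)) :
    ∫ t in (0:ℝ)..1, ∫ x : Fin D → ℝ, f (t, x) =
      ∫ z, f z ∂((volume.restrict (Set.Icc (0:ℝ) 1)).prod volume) := by
  rw [intervalIntegral.integral_of_le (by norm_num : (0:ℝ) ≤ 1),
    ← MeasureTheory.integral_Icc_eq_integral_Ioc, MeasureTheory.integral_prod f hf]

end Aux

/-- The time-score-matching objective equals the tractable objective `L` plus a constant
(the expected squared true time score) independent of the model `s`. -/
theorem stmt_8 {D : ℕ}
    (p : ℝ → (Fin D → ℝ) → ℝ) (ℓ' : ℝ → (Fin D → ℝ) → ℝ)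
    (s s' : (Fin D → ℝ) → ℝ → ℝ) (lam lam' : ℝ → ℝ)
    (hppos : ∀ t x, 0 < p t x)
    (hℓ : ∀ x t, HasDerivAt (fun u => Real.log (p u x)) (ℓ' t x) t)
    (hssm : ∀ x t, HasDerivAt (fun u => s x u) (s' x t) t)
    (hlamsm : ∀ t, HasDerivAt lam (lam' t) t)
    (hlampos : ∀ t ∈ Set.Icc (0:ℝ) 1, 0 < lam t)
    (hdecay : ∀ t ∈ Set.Icc (0:ℝ) 1,
      Filter.Tendsto (fun x : Fin D → ℝ => lam t * p t x * s x t)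
        (Filter.cocompact _) (nhds 0))
    (hintJ : Integrable
      (fun z : ℝ × (Fin D → ℝ) => lam z.1 * (ℓ' z.1 z.2 - s z.2 z.1)^2 * p z.1 z.2)
      ((volume.restrict (Set.Icc (0:ℝ) 1)).prod volume))
    (hintL : Integrable
      (fun z : ℝ × (Fin D → ℝ) =>
        (2 * lam z.1 * s' z.2 z.1 + 2 * lam' z.1 * s z.2 z.1
          + lam z.1 * (s z.2 z.1)^2) * p z.1 z.2)
      ((volume.restrict (Set.Icc (0:ℝ) 1)).prod volume))
    (hintC : Integrable
      (fun z : ℝ × (Fin D → ℝ) => lam z.1 * (ℓ' z.1 z.2)^2 * p z.1 z.2)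
      ((volume.restrict (Set.Icc (0:ℝ) 1)).prod volume))
    (hint0 : Integrable (fun x : Fin D → ℝ => lam 0 * s x 0 * p 0 x))
    (hint1 : Integrable (fun x : Fin D → ℝ => lam 1 * s x 1 * p 1 x)) :
    ∫ t in (0:ℝ)..1, ∫ x : Fin D → ℝ, lam t * (ℓ' t x - s x t)^2 * p t x =
      ((2 * ∫ x : Fin D → ℝ, lam 0 * s x 0 * p 0 x)
        - (2 * ∫ x : Fin D → ℝ, lam 1 * s x 1 * p 1 x)
        + ∫ t in (0:ℝ)..1, ∫ x : Fin D → ℝ,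
            (2 * lam t * s' x t + 2 * lam' t * s x t + lam t * (s x t)^2) * p t x)
      + ∫ t in (0:ℝ)..1, ∫ x : Fin D → ℝ, lam t * (ℓ' t x)^2 * p t x := by
  set μ : Measure (ℝ × (Fin D → ℝ)) := (volume.restrict (Set.Icc (0:ℝ) 1)).prod volume with hμ
  -- derivative of p in time
  have hp : ∀ x t, HasDerivAt (fun u => p u x) (ℓ' t x * p t x) t := by
    intro x t
    have h := (hℓ x t).exp
    have hco : (fun u => Real.exp (Real.log (p u x))) = fun u => p u x := by
      funext u; exact Real.exp_log (hppos u x)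
    rw [hco, Real.exp_log (hppos t x)] at h
    simpa [mul_comm] using h
  -- derivative of g t = lam t * p t x * s x t
  have hg : ∀ x t, HasDerivAt (fun u => lam u * p u x * s x u)
      (lam' t * p t x * s x t + lam t * (ℓ' t x * p t x) * s x t
        + lam t * p t x * s' x t) t := by
    intro x t
    have h := ((hlamsm t).mul (hp x t)).mul (hssm x t)
    refine h.congr_deriv ?_
    simp only [Pi.mul_apply]; ring
  -- the combined function F
  set F : ℝ × (Fin D → ℝ) → ℝ := fun z =>
    lam z.1 * (ℓ' z.1 z.2 - s z.2 z.1)^2 * p z.1 z.2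
    - (2 * lam z.1 * s' z.2 z.1 + 2 * lam' z.1 * s z.2 z.1
        + lam z.1 * (s z.2 z.1)^2) * p z.1 z.2
    - lam z.1 * (ℓ' z.1 z.2)^2 * p z.1 z.2 with hF
  have hFint : Integrable F μ := (hintJ.sub hintL).sub hintC
  -- F(t,x) = -2 * (d/dt) (lam t * p t x * s x t)
  have hFderiv : ∀ x t, F (t, x) =
      -2 * (lam' t * p t x * s x t + lam t * (ℓ' t x * p t x) * s x t
        + lam t * p t x * s' x t) := by
    intro x t; simp only [hF]; ring
  -- a.e. x, the inner t-integral of F equals the boundary terms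
  have hae : ∀ᵐ x : Fin D → ℝ,
      (∫ t, F (t, x) ∂(volume.restrict (Set.Icc (0:ℝ) 1))) =
        2 * (lam 0 * s x 0 * p 0 x) - 2 * (lam 1 * s x 1 * p 1 x) := by
    filter_upwards [hFint.prod_left_ae] with x hx
    have hxIcc : IntegrableOn (fun t => F (t, x)) (Set.Icc (0:ℝ) 1) volume := hx
    have hii : IntervalIntegrable (fun t => F (t, x)) volume 0 1 := by
      rw [intervalIntegrable_iff_integrableOn_Icc_of_le (by norm_num : (0:ℝ) ≤ 1)]
      exact hxIcc
    have hftc : ∫ t in (0:ℝ)..1, F (t, x) =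
        (-2 * (lam 1 * p 1 x * s x 1)) - (-2 * (lam 0 * p 0 x * s x 0)) := by
      refine intervalIntegral.integral_eq_sub_of_hasDerivAt
        (f := fun u => -2 * (lam u * p u x * s x u)) (fun t _ => ?_) hii
      rw [hFderiv x t]
      exact (hg x t).const_mul (-2 : ℝ)
    have : ∫ t in (0:ℝ)..1, F (t, x) =
        ∫ t, F (t, x) ∂(volume.restrict (Set.Icc (0:ℝ) 1)) := by
      rw [intervalIntegral.integral_of_le (by norm_num : (0:ℝ) ≤ 1),
        ← MeasureTheory.integral_Icc_eq_integral_Ioc]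
    rw [← this, hftc]; ring
  -- integrate over x
  have hFeq : ∫ z, F z ∂μ =
      2 * (∫ x : Fin D → ℝ, lam 0 * s x 0 * p 0 x)
        - 2 * (∫ x : Fin D → ℝ, lam 1 * s x 1 * p 1 x) := by
    rw [MeasureTheory.integral_prod_symm F hFint, integral_congr_ae hae,
      integral_sub (hint0.const_mul 2) (hint1.const_mul 2),
      MeasureTheory.integral_const_mul, MeasureTheory.integral_const_mul]
  have hsplit : ∫ z, F z ∂μ =
      (∫ z : ℝ × (Fin D → ℝ),
          lam z.1 * (ℓ' z.1 z.2 - s z.2 z.1)^2 * p z.1 z.2 ∂μ)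
        - (∫ z : ℝ × (Fin D → ℝ),
          (2 * lam z.1 * s' z.2 z.1 + 2 * lam' z.1 * s z.2 z.1
            + lam z.1 * (s z.2 z.1)^2) * p z.1 z.2 ∂μ)
        - (∫ z : ℝ × (Fin D → ℝ), lam z.1 * (ℓ' z.1 z.2)^2 * p z.1 z.2 ∂μ) := by
    have h := integral_sub (hintJ.sub hintL) hintC
    simp only [Pi.sub_apply] at h
    rw [integral_sub hintJ hintL] at h
    exact h
  have e1 := stmt8_conv (fun z : ℝ × (Fin D → ℝ) =>
    lam z.1 * (ℓ' z.1 z.2 - s z.2 z.1)^2 * p z.1 z.2) hintJ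
  have e2 := stmt8_conv (fun z : ℝ × (Fin D → ℝ) =>
    (2 * lam z.1 * s' z.2 z.1 + 2 * lam' z.1 * s z.2 z.1
      + lam z.1 * (s z.2 z.1)^2) * p z.1 z.2) hintL
  have e3 := stmt8_conv (fun z : ℝ × (Fin D → ℝ) =>
    lam z.1 * (ℓ' z.1 z.2)^2 * p z.1 z.2) hintC
  simp only [] at e1 e2 e3
  rw [e1, e2, e3]
  rw [hsplit] at hFeq
  linarith
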